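/- Let D ⊆ ℝ² be an open set star-shaped with respect to a point a ∈ D, and let u : D → ℝ be continuously differentiable. Define the Poincaré lifting (P_a u)(x) = ∫₀¹ τ u(a + τ(x−a)) (x−a) dτ. Then div(P_a u) = u on D, i.e., P_a is a right inverse of the two-dimensional divergence operator on C¹ functions. -/

import Mathlib

open MeasureTheory Metric

/-- Two-dimensional divergence of a vector field. -/
noncomputable def div2 (v : (Fin 2 → ℝ) → (Fin 2 → ℝ)) (x : Fin 2 → ℝ) : ℝ :=
  ∑ i : Fin 2, fderiv ℝ v x (Pi.single i 1) i

/-- Poincaré lifting centered at `a`. -/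
noncomputable def poincareLift (a : Fin 2 → ℝ) (u : (Fin 2 → ℝ) → ℝ)
    (x : Fin 2 → ℝ) : Fin 2 → ℝ :=
  ∫ τ in (0:ℝ)..1, (τ * u (a + τ • (x - a))) • (x - a)

set_option maxHeartbeats 1000000 in
theorem poincare_lift_right_inverse_of_div
    (D : Set (Fin 2 → ℝ)) (hD : IsOpen D) (a : Fin 2 → ℝ) (ha : a ∈ D)
    (hstar : ∀ x ∈ D, ∀ τ ∈ Set.Icc (0:ℝ) 1, a + τ • (x - a) ∈ D)
    (u : (Fin 2 → ℝ) → ℝ) (hu : ContDiffOn ℝ 1 u D) :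
    ∀ x ∈ D, div2 (poincareLift a u) x = u x := by
  -- continuity and differentiability facts about u
  have hu_cont : ContinuousOn u D := hu.continuousOn
  have hDu_cont : ContinuousOn (fderiv ℝ u) D :=
    hu.continuousOn_fderiv_of_isOpen hD le_rfl
  have hdiff : ∀ p ∈ D, HasFDerivAt u (fderiv ℝ u p) p := fun p hp =>
    (((hu.contDiffAt (hD.mem_nhds hp)).differentiableAt one_ne_zero)).hasFDerivAt
  intro x hx
  -- thickened segment
  have hc_cont : Continuous (fun τ : ℝ => a + τ • (x - a)) :=
    continuous_const.add (continuous_id.smul continuous_const)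
  have hKcomp : IsCompact ((fun τ : ℝ => a + τ • (x - a)) '' Set.Icc 0 1) :=
    isCompact_Icc.image hc_cont
  have hsub : ((fun τ : ℝ => a + τ • (x - a)) '' Set.Icc 0 1) ⊆ D := by
    rintro _ ⟨τ, hτ, rfl⟩; exact hstar x hx τ hτ
  obtain ⟨δ, hδ, hδsub⟩ := hKcomp.exists_thickening_subset_open hD hsub
  set K := cthickening (δ/2) ((fun τ : ℝ => a + τ • (x - a)) '' Set.Icc 0 1) with hK_def
  have hKcth : IsCompact K := hKcomp.cthickening
  have hKD : K ⊆ D := (cthickening_subset_thickening' hδ (by linarith) _).trans hδsub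
  have hmemK : ∀ y ∈ ball x (δ/2), ∀ τ ∈ Set.Icc (0:ℝ) 1, a + τ • (y - a) ∈ K := by
    intro y hy τ hτ
    refine mem_cthickening_of_dist_le (a + τ • (y - a)) (a + τ • (x - a)) (δ/2) _
      (Set.mem_image_of_mem _ hτ) ?_
    rw [dist_eq_norm]
    have : a + τ • (y - a) - (a + τ • (x - a)) = τ • (y - x) := by module
    rw [this, norm_smul]
    calc ‖τ‖ * ‖y - x‖ ≤ 1 * ‖y - x‖ := by
          apply mul_le_mul_of_nonneg_right _ (norm_nonneg _)
          rw [Real.norm_eq_abs, abs_le]; constructor <;> linarith [hτ.1, hτ.2]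
      _ ≤ δ/2 := by rw [one_mul, ← dist_eq_norm]; exact le_of_lt hy
  have hmemD : ∀ y ∈ ball x (δ/2), ∀ τ ∈ Set.Icc (0:ℝ) 1, a + τ • (y - a) ∈ D :=
    fun y hy τ hτ => hKD (hmemK y hy τ hτ)
  have hxball : x ∈ ball x (δ/2) := mem_ball_self (by linarith)
  -- bounds on u and its derivative on K
  obtain ⟨M₁, hM₁⟩ := hKcth.exists_bound_of_continuousOn (hu_cont.mono hKD)
  obtain ⟨M₂, hM₂⟩ := hKcth.exists_bound_of_continuousOn (hDu_cont.mono hKD)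
  have hM₁0 : 0 ≤ M₁ := le_trans (norm_nonneg _) (hM₁ _ (hmemK x hxball 0 (by norm_num)))
  have hM₂0 : 0 ≤ M₂ := le_trans (norm_nonneg _) (hM₂ _ (hmemK x hxball 0 (by norm_num)))
  -- the family and its derivative in the parameter
  set F : (Fin 2 → ℝ) → ℝ → (Fin 2 → ℝ) :=
    fun y τ => (τ * u (a + τ • (y - a))) • (y - a) with hF_def
  set F' : (Fin 2 → ℝ) → ℝ → ((Fin 2 → ℝ) →L[ℝ] (Fin 2 → ℝ)) := fun y τ =>
    (τ * u (a + τ • (y - a))) • ContinuousLinearMap.id ℝ (Fin 2 → ℝ) +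
    (τ • ((fderiv ℝ u (a + τ • (y - a))).comp
      (τ • ContinuousLinearMap.id ℝ (Fin 2 → ℝ)))).smulRight (y - a) with hF'_def
  have hIoc : Set.uIoc (0:ℝ) 1 ⊆ Set.Icc (0:ℝ) 1 := by
    rw [Set.uIoc_of_le zero_le_one]; exact Set.Ioc_subset_Icc_self
  have hIcc : Set.uIcc (0:ℝ) 1 = Set.Icc (0:ℝ) 1 := Set.uIcc_of_le zero_le_one
  -- differentiability of F in y
  have h_deriv : ∀ τ ∈ Set.Icc (0:ℝ) 1, ∀ y ∈ ball x (δ/2),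
      HasFDerivAt (fun y => F y τ) (F' y τ) y := by
    intro τ hτ y hy
    have h0 : HasFDerivAt (fun y : Fin 2 → ℝ => a + τ • (y - a))
        (τ • ContinuousLinearMap.id ℝ (Fin 2 → ℝ)) y :=
      (((hasFDerivAt_id y).sub_const a).const_smul τ).const_add a
    have h1 := (hdiff _ (hmemD y hy τ hτ)).comp y h0
    have h2 := h1.const_mul τ
    have h3 := h2.smul ((hasFDerivAt_id y).sub_const a)
    exact h3
  -- continuity of F y in τ on Icc 0 1
  have hFcont : ∀ y ∈ ball x (δ/2), ContinuousOn (F y) (Set.Icc 0 1) := by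
    intro y hy
    have hcy : Continuous (fun τ : ℝ => a + τ • (y - a)) :=
      continuous_const.add (continuous_id.smul continuous_const)
    exact ((continuousOn_id.mul (hu_cont.comp hcy.continuousOn
      (fun τ hτ => hmemD y hy τ hτ))).smul continuousOn_const)
  -- continuity of F' x in τ on Icc 0 1
  have hF'cont : ContinuousOn (F' x) (Set.Icc 0 1) := by
    have hmaps : ∀ τ ∈ Set.Icc (0:ℝ) 1, a + τ • (x - a) ∈ D :=
      fun τ hτ => hmemD x hxball τ hτ
    have g1 : ContinuousOn (fun τ : ℝ => τ * u (a + τ • (x - a))) (Set.Icc 0 1) :=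
      continuousOn_id.mul (hu_cont.comp hc_cont.continuousOn hmaps)
    have g2 : ContinuousOn (fun τ : ℝ => fderiv ℝ u (a + τ • (x - a))) (Set.Icc 0 1) :=
      hDu_cont.comp hc_cont.continuousOn hmaps
    have g3 : ContinuousOn (fun τ : ℝ => τ • ContinuousLinearMap.id ℝ (Fin 2 → ℝ))
        (Set.Icc 0 1) := continuousOn_id.smul continuousOn_const
    have g4 := g2.clm_comp g3
    have g5 : ContinuousOn (fun τ : ℝ => τ • ((fderiv ℝ u (a + τ • (x - a))).comp
        (τ • ContinuousLinearMap.id ℝ (Fin 2 → ℝ)))) (Set.Icc 0 1) :=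
      continuousOn_id.smul g4
    have g6 : ContinuousOn (fun τ : ℝ => (τ • ((fderiv ℝ u (a + τ • (x - a))).comp
        (τ • ContinuousLinearMap.id ℝ (Fin 2 → ℝ)))).smulRight (x - a)) (Set.Icc 0 1) :=
      ((ContinuousLinearMap.smulRightL ℝ (Fin 2 → ℝ) (Fin 2 → ℝ)).flip
        (x - a)).continuous.comp_continuousOn g5
    exact (g1.smul continuousOn_const).add g6
  -- uniform bound
  set B : ℝ := M₁ + M₂ * (‖x - a‖ + δ/2) with hB_def
  have h_bound : ∀ τ ∈ Set.Icc (0:ℝ) 1, ∀ y ∈ ball x (δ/2), ‖F' y τ‖ ≤ B := by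
    intro τ hτ y hy
    have hτ1 : ‖τ‖ ≤ 1 := by
      rw [Real.norm_eq_abs, abs_le]; constructor <;> linarith [hτ.1, hτ.2]
    have hya : ‖y - a‖ ≤ ‖x - a‖ + δ/2 := by
      calc ‖y - a‖ ≤ ‖y - x‖ + ‖x - a‖ := by
            have := norm_add_le (y - x) (x - a); simpa using this
        _ ≤ ‖x - a‖ + δ/2 := by
            rw [← dist_eq_norm] at *; linarith [mem_ball.mp hy, dist_comm y x ▸ (mem_ball.mp hy)]
    have hu_b : ‖u (a + τ • (y - a))‖ ≤ M₁ := hM₁ _ (hmemK y hy τ hτ)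
    have hDu_b : ‖fderiv ℝ u (a + τ • (y - a))‖ ≤ M₂ := hM₂ _ (hmemK y hy τ hτ)
    have hid : ‖ContinuousLinearMap.id ℝ (Fin 2 → ℝ)‖ ≤ 1 :=
      ContinuousLinearMap.norm_id_le
    have hT : ‖τ • ContinuousLinearMap.id ℝ (Fin 2 → ℝ)‖ ≤ 1 := by
      refine le_trans (ContinuousLinearMap.opNorm_smul_le _ _) ?_
      nlinarith [norm_nonneg (ContinuousLinearMap.id ℝ (Fin 2 → ℝ)), norm_nonneg τ]
    have h1 : ‖(τ * u (a + τ • (y - a))) • ContinuousLinearMap.id ℝ (Fin 2 → ℝ)‖ ≤ M₁ := by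
      refine le_trans (ContinuousLinearMap.opNorm_smul_le _ _) ?_
      rw [norm_mul]
      have t1 : ‖τ‖ * ‖u (a + τ • (y - a))‖ ≤ 1 * M₁ :=
        mul_le_mul hτ1 hu_b (norm_nonneg _) zero_le_one
      have t2 : ‖τ‖ * ‖u (a + τ • (y - a))‖ * ‖ContinuousLinearMap.id ℝ (Fin 2 → ℝ)‖
          ≤ (1 * M₁) * 1 :=
        mul_le_mul t1 hid (norm_nonneg _) (by linarith)
      linarith
    have hcomp : ‖(fderiv ℝ u (a + τ • (y - a))).comp
        (τ • ContinuousLinearMap.id ℝ (Fin 2 → ℝ))‖ ≤ M₂ := by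
      refine le_trans (ContinuousLinearMap.opNorm_comp_le _ _) ?_
      nlinarith [norm_nonneg (fderiv ℝ u (a + τ • (y - a))),
        norm_nonneg (τ • ContinuousLinearMap.id ℝ (Fin 2 → ℝ))]
    have hs : ‖τ • ((fderiv ℝ u (a + τ • (y - a))).comp
        (τ • ContinuousLinearMap.id ℝ (Fin 2 → ℝ)))‖ ≤ M₂ := by
      refine le_trans (ContinuousLinearMap.opNorm_smul_le _ _) ?_
      nlinarith [norm_nonneg ((fderiv ℝ u (a + τ • (y - a))).comp
        (τ • ContinuousLinearMap.id ℝ (Fin 2 → ℝ))), norm_nonneg τ]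
    have h2 : ‖(τ • ((fderiv ℝ u (a + τ • (y - a))).comp
        (τ • ContinuousLinearMap.id ℝ (Fin 2 → ℝ)))).smulRight (y - a)‖
        ≤ M₂ * (‖x - a‖ + δ/2) := by
      rw [ContinuousLinearMap.norm_smulRight_apply]
      exact mul_le_mul hs hya (norm_nonneg _) hM₂0
    refine le_trans (norm_add_le _ _) ?_
    rw [hB_def]
    linarith
  -- differentiation under the integral sign
  have hδ2 : (0:ℝ) < δ/2 := by linarith
  have hMain : HasFDerivAt (fun y => ∫ τ in (0:ℝ)..1, F y τ)
      (∫ τ in (0:ℝ)..1, F' x τ) x := by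
    apply intervalIntegral.hasFDerivAt_integral_of_dominated_of_fderiv_le
      (s := ball x (δ/2)) (bound := fun _ => B) (ball_mem_nhds x hδ2)
    · filter_upwards [ball_mem_nhds x hδ2] with y hy
      exact ((hFcont y hy).mono hIoc).aestronglyMeasurable measurableSet_uIoc
    · exact ContinuousOn.intervalIntegrable (by rw [hIcc]; exact hFcont x hxball)
    · exact (hF'cont.mono hIoc).aestronglyMeasurable measurableSet_uIoc
    · filter_upwards with τ hτ y hy
      exact h_bound τ (hIoc hτ) y hy
    · exact intervalIntegrable_const
    · filter_upwards with τ hτ y hy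
      exact h_deriv τ (hIoc hτ) y hy
  have hPL : poincareLift a u = fun y => ∫ τ in (0:ℝ)..1, F y τ := rfl
  have hfderiv : fderiv ℝ (poincareLift a u) x = ∫ τ in (0:ℝ)..1, F' x τ := by
    rw [hPL]; exact hMain.fderiv
  -- evaluation lemma for scalar-valued CLMs on Fin 2
  have hL : ∀ (L : (Fin 2 → ℝ) →L[ℝ] ℝ) (v : Fin 2 → ℝ),
      L v = v 0 * L (Pi.single 0 1) + v 1 * L (Pi.single 1 1) := by
    intro L v
    have hv : v = v 0 • (Pi.single 0 1 : Fin 2 → ℝ) + v 1 • (Pi.single 1 1 : Fin 2 → ℝ) := by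
      funext j; fin_cases j <;> simp [Pi.single_apply]
    conv_lhs => rw [hv]
    rw [map_add, L.map_smul, L.map_smul, smul_eq_mul, smul_eq_mul]
  -- the function along the segment and its derivative
  set g : ℝ → ℝ := fun τ => τ^2 * u (a + τ • (x - a)) with hg_def
  set g' : ℝ → ℝ := fun τ => 2*τ * u (a + τ • (x - a)) +
      τ^2 * (fderiv ℝ u (a + τ • (x - a))) (x - a) with hg'_def
  have hmaps : ∀ τ ∈ Set.Icc (0:ℝ) 1, a + τ • (x - a) ∈ D :=
    fun τ hτ => hmemD x hxball τ hτ
  have hg_deriv : ∀ τ ∈ Set.uIcc (0:ℝ) 1, HasDerivAt g (g' τ) τ := by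
    intro τ hτ
    rw [hIcc] at hτ
    have hc' : HasDerivAt (fun τ : ℝ => a + τ • (x - a)) (x - a) τ := by
      simpa using (((hasDerivAt_id τ).smul_const (x - a)).const_add a)
    have h1 : HasDerivAt (fun τ : ℝ => u (a + τ • (x - a)))
        ((fderiv ℝ u (a + τ • (x - a))) (x - a)) τ :=
      (hdiff _ (hmaps τ hτ)).comp_hasDerivAt τ hc'
    have h2 : HasDerivAt (fun τ : ℝ => τ^2) (2*τ) τ := by
      simpa using hasDerivAt_pow 2 τ
    exact h2.mul h1
  have hg'_cont : ContinuousOn g' (Set.Icc 0 1) := by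
    have c1 : ContinuousOn (fun τ : ℝ => u (a + τ • (x - a))) (Set.Icc 0 1) :=
      hu_cont.comp hc_cont.continuousOn hmaps
    have c2 : ContinuousOn (fun τ : ℝ => (fderiv ℝ u (a + τ • (x - a))) (x - a))
        (Set.Icc 0 1) :=
      (hDu_cont.comp hc_cont.continuousOn hmaps).clm_apply continuousOn_const
    exact ((continuousOn_const.mul continuousOn_id).mul c1).add
      ((continuousOn_id.pow 2).mul c2)
  have hFTC : (∫ τ in (0:ℝ)..1, g' τ) = g 1 - g 0 :=
    intervalIntegral.integral_eq_sub_of_hasDerivAt hg_deriv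
      (ContinuousOn.intervalIntegrable (by rw [hIcc]; exact hg'_cont))
  -- pull coordinates out of the vector-valued integral
  have hF'int : IntervalIntegrable (F' x) volume 0 1 :=
    ContinuousOn.intervalIntegrable (by rw [hIcc]; exact hF'cont)
  have hint_i : ∀ i : Fin 2, IntervalIntegrable
      (fun τ => (F' x τ (Pi.single i 1)) i) volume 0 1 := by
    intro i
    refine ContinuousOn.intervalIntegrable ?_
    rw [hIcc]
    exact (continuous_apply i).comp_continuousOn (hF'cont.clm_apply continuousOn_const)
  have happly : ∀ i : Fin 2, ((∫ τ in (0:ℝ)..1, F' x τ) (Pi.single i 1)) i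
      = ∫ τ in (0:ℝ)..1, (F' x τ (Pi.single i 1)) i := by
    intro i
    rw [ContinuousLinearMap.intervalIntegral_apply hF'int]
    have hint2 : IntervalIntegrable (fun τ => F' x τ (Pi.single i 1)) volume 0 1 :=
      ContinuousOn.intervalIntegrable (by rw [hIcc]; exact hF'cont.clm_apply continuousOn_const)
    exact ((ContinuousLinearMap.proj (R := ℝ) (φ := fun _ : Fin 2 => ℝ)
      i).intervalIntegral_comp_comm hint2).symm
  -- pointwise identity of integrands
  have hpt : ∀ τ : ℝ, (F' x τ (Pi.single 0 1)) 0 + (F' x τ (Pi.single 1 1)) 1 = g' τ := by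
    intro τ
    simp only [hF'_def, hg'_def, ContinuousLinearMap.add_apply,
      ContinuousLinearMap.smul_apply, ContinuousLinearMap.smulRight_apply,
      ContinuousLinearMap.coe_comp', Function.comp_apply,
      ContinuousLinearMap.coe_id', id_eq, Pi.add_apply, Pi.smul_apply,
      smul_eq_mul, Pi.single_eq_same, _root_.map_smul]
    rw [hL (fderiv ℝ u (a + τ • (x - a))) (x - a)]
    ring
  -- put everything together
  have hdiv : div2 (poincareLift a u) x = ∫ τ in (0:ℝ)..1, g' τ := by
    unfold div2
    rw [hfderiv, Fin.sum_univ_two, happly 0, happly 1,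
      ← intervalIntegral.integral_add (hint_i 0) (hint_i 1)]
    exact intervalIntegral.integral_congr (fun τ _ => hpt τ)
  rw [hdiv, hFTC, hg_def]
  norm_num
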